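/- Hölder's identity: For a positive integer n and an integer r, c_n(r) = φ(n) μ(n/d) / φ(n/d), where d = gcd(n, r). -/

import Mathlib

open Polynomial Finset

/-- The Ramanujan sum `c_n(r) = ∑_{1 ≤ j ≤ n, gcd(j,n)=1} e^{2πijr/n}`. -/
noncomputable def ramanujanSum (n : ℕ) (r : ℤ) : ℂ :=
  ∑ j ∈ Finset.Icc 1 n, if Nat.gcd j n = 1 then
    Complex.exp (2 * (Real.pi : ℂ) * Complex.I * (j : ℂ) * (r : ℂ) / (n : ℂ)) else 0

/-- `e^{2πi/n}`, the standard primitive `n`-th root of unity. -/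
noncomputable def RamanujanAux.rz (n : ℕ) : ℂ :=
  Complex.exp (2 * (Real.pi : ℂ) * Complex.I / (n : ℂ))

namespace RamanujanAux

lemma rz_prim {n : ℕ} (hn : n ≠ 0) : IsPrimitiveRoot (rz n) n := by
  simpa [rz, mul_comm, mul_assoc, mul_left_comm] using Complex.isPrimitiveRoot_exp n hn

lemma zpow_congr {m : ℕ} (hm : m ≠ 0) {ζ : ℂ} (hζ : IsPrimitiveRoot ζ m) {a b : ℤ}
    (h : (a : ZMod m) = (b : ZMod m)) : ζ ^ a = ζ ^ b := by
  have hd : (m : ℤ) ∣ a - b := by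
    rwa [← ZMod.intCast_zmod_eq_zero_iff_dvd, Int.cast_sub, sub_eq_zero]
  have h1 : ζ ^ (a - b) = 1 := (hζ.zpow_eq_one_iff_dvd _).2 hd
  have hne : ζ ≠ 0 := hζ.ne_zero hm
  calc ζ ^ a = ζ ^ (b + (a - b)) := by ring_nf
    _ = ζ ^ b * ζ ^ (a - b) := zpow_add₀ hne b (a - b)
    _ = ζ ^ b := by rw [h1, mul_one]

lemma exp_eq_rz (n : ℕ) (j : ℕ) (r : ℤ) :
    Complex.exp (2 * (Real.pi : ℂ) * Complex.I * (j : ℂ) * (r : ℂ) / (n : ℂ)) =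
      rz n ^ ((j : ℤ) * r) := by
  rw [rz, ← Complex.exp_int_mul]
  congr 1
  push_cast
  ring

lemma sum_nthRootsFinset (n : ℕ) (hn : n ≠ 0) :
    ∑ z ∈ Polynomial.nthRootsFinset n (1 : ℂ), z = if n = 1 then 1 else 0 := by
  have hζ := Complex.isPrimitiveRoot_exp n hn
  set ζ := Complex.exp (2 * Real.pi * Complex.I / n) with hζdef
  have hroots : (Polynomial.nthRoots n (1 : ℂ)) = (Multiset.range n).map (ζ ^ · * 1) :=
    hζ.nthRoots_eq (one_pow n)
  have hnodup := hζ.nthRoots_one_nodup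
  have hsum : ∑ z ∈ Polynomial.nthRootsFinset n (1 : ℂ), z = ∑ j ∈ Finset.range n, ζ ^ j := by
    rw [Finset.sum, Polynomial.nthRootsFinset_def, Multiset.toFinset_val,
      Multiset.dedup_eq_self.mpr hnodup, hroots, Finset.sum, Finset.range_val,
      Multiset.map_map]
    simp
  rw [hsum]
  rcases eq_or_ne n 1 with h1 | h1
  · simp [h1]
  · rw [if_neg h1]
    have hζ1 : ζ ≠ 1 := by
      intro h
      exact h1 (Nat.dvd_one.mp (hζ.dvd_of_pow_eq_one 1 (by rw [pow_one, h])))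
    rw [geom_sum_eq hζ1, hζ.pow_eq_one, sub_self, zero_div]

lemma sum_primitiveRoots_eq_moebius (m : ℕ) (hm : 0 < m) :
    ∑ z ∈ primitiveRoots m ℂ, z = (ArithmeticFunction.moebius m : ℂ) := by
  have key : ∀ k > 0, ∑ d ∈ Nat.divisors k, (∑ z ∈ primitiveRoots d ℂ, z)
      = (fun k => if k = 1 then (1:ℂ) else 0) k := by
    intro k hk
    have hζ := Complex.isPrimitiveRoot_exp k hk.ne'
    rw [← Finset.sum_biUnion (fun i _ j _ hij => IsPrimitiveRoot.disjoint hij),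
      ← IsPrimitiveRoot.nthRoots_one_eq_biUnion_primitiveRoots, sum_nthRootsFinset k hk.ne']
  have := (ArithmeticFunction.sum_eq_iff_sum_smul_moebius_eq
    (f := fun d => ∑ z ∈ primitiveRoots d ℂ, z)
    (g := fun k => if k = 1 then (1:ℂ) else 0)).mp key m hm
  rw [← this]
  rw [Finset.sum_eq_single (m, 1)]
  · simp
  · rintro ⟨a, b⟩ hab hne
    rw [Nat.mem_divisorsAntidiagonal] at hab
    have hb : b ≠ 1 := by
      rintro rfl
      exact hne (by simp [← hab.1])
    simp [hb]
  · intro h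
    exact absurd (Nat.mem_divisorsAntidiagonal.mpr ⟨(mul_one m).symm ▸ rfl, hm.ne'⟩) h

lemma units_sum_eq (m : ℕ) [NeZero m] (hm : 0 < m) (s : ℤ) (hs : Int.gcd s m = 1) :
    ∑ v : (ZMod m)ˣ, rz m ^ (((v : ZMod m).val : ℤ) * s)
      = ∑ z ∈ primitiveRoots m ℂ, z := by
  have hζ := rz_prim hm.ne'
  obtain ⟨a, b, hab⟩ := Int.isCoprime_iff_gcd_eq_one.mpr hs
  have hsu : IsUnit ((s : ZMod m)) := by
    refine IsUnit.of_mul_eq_one (a := (s : ZMod m)) ((a : ZMod m)) ?_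
    have : ((a * s + b * m : ℤ) : ZMod m) = 1 := by rw [hab]; simp
    simpa [mul_comm] using this
  set w : (ZMod m)ˣ := hsu.unit with hw
  have hwc : (w : ZMod m) = (s : ZMod m) := rfl
  have step1 : ∑ v : (ZMod m)ˣ, rz m ^ (((v : ZMod m).val : ℤ) * s)
      = ∑ v : (ZMod m)ˣ, rz m ^ ((((v : ZMod m)).val : ℤ)) := by
    calc ∑ v : (ZMod m)ˣ, rz m ^ (((v : ZMod m).val : ℤ) * s)
        = ∑ v : (ZMod m)ˣ, rz m ^ ((((v * w : (ZMod m)ˣ) : ZMod m)).val : ℤ) := by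
          refine Finset.sum_congr rfl fun v _ => ?_
          refine (zpow_congr hm.ne' hζ ?_).symm
          push_cast [ZMod.natCast_val, ZMod.cast_id]
          simp [hwc]
      _ = ∑ v : (ZMod m)ˣ, rz m ^ ((((v : ZMod m)).val : ℤ)) :=
          Equiv.sum_comp (Equiv.mulRight w)
            (fun v : (ZMod m)ˣ => rz m ^ ((((v : ZMod m)).val : ℤ)))
  rw [step1]
  refine Finset.sum_bij (fun v _ => rz m ^ ((v : ZMod m).val)) ?_ ?_ ?_ ?_
  · intro v _
    rw [mem_primitiveRoots hm]
    exact hζ.pow_of_coprime _ (ZMod.val_coe_unit_coprime v)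
  · intro v _ v' _ h
    have := hζ.pow_inj (ZMod.val_lt (v : ZMod m)) (ZMod.val_lt (v' : ZMod m)) h
    ext
    exact_mod_cast (ZMod.val_injective m this : (v : ZMod m) = v')
  · intro z hz
    rw [mem_primitiveRoots hm] at hz
    obtain ⟨i, hi, hzi⟩ := hζ.eq_pow_of_pow_eq_one hz.pow_eq_one
    have hcop : Nat.Coprime i m := (hζ.pow_iff_coprime hm i).mp (hzi ▸ hz)
    refine ⟨ZMod.unitOfCoprime i hcop, mem_univ _, ?_⟩
    rw [← hzi]
    simp [ZMod.unitOfCoprime, ZMod.val_cast_of_lt hi]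
  · intro v _
    norm_cast

lemma sum_comp_unitsMap {m n : ℕ} [NeZero n] [NeZero m] (h : m ∣ n) (f : (ZMod m)ˣ → ℂ) :
    ∑ u : (ZMod n)ˣ, f (ZMod.unitsMap h u)
      = (Nat.card (ZMod.unitsMap h).ker) • ∑ v : (ZMod m)ˣ, f v := by
  classical
  have hsurj := ZMod.unitsMap_surjective h
  rw [← Fintype.sum_fiberwise (ZMod.unitsMap h) (fun u => f (ZMod.unitsMap h u)),
    Finset.smul_sum]
  refine Finset.sum_congr rfl fun v _ => ?_
  have hconst : ∀ a : {u : (ZMod n)ˣ // ZMod.unitsMap h u = v},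
      f (ZMod.unitsMap h a) = f v := by
    rintro ⟨a, ha⟩; simp [ha]
  rw [Finset.sum_congr rfl (fun a _ => hconst a), Finset.sum_const, Finset.card_univ]
  congr 1
  have e : {u : (ZMod n)ˣ // ZMod.unitsMap h u = v} ≃ (ZMod.unitsMap h).ker := by
    refine (Equiv.subtypeEquiv (Equiv.refl _) ?_).trans
      (MonoidHom.fiberEquivKerOfSurjective hsurj v)
    intro u; simp [Set.mem_preimage]
  rw [Fintype.card_congr e, Nat.card_eq_fintype_card]

lemma totient_eq_card_ker_mul {m n : ℕ} [NeZero n] [NeZero m] (h : m ∣ n) :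
    Nat.totient n = (Nat.card (ZMod.unitsMap h).ker) * Nat.totient m := by
  have hsurj := ZMod.unitsMap_surjective h
  have h1 : Nat.card (ZMod n)ˣ = Nat.card ((ZMod n)ˣ ⧸ (ZMod.unitsMap h).ker)
      * Nat.card (ZMod.unitsMap h).ker :=
    Subgroup.card_eq_card_quotient_mul_card_subgroup _
  have h2 : Nat.card ((ZMod n)ˣ ⧸ (ZMod.unitsMap h).ker) = Nat.card (ZMod m)ˣ :=
    Nat.card_congr (QuotientGroup.quotientKerEquivOfSurjective _ hsurj).toEquiv
  rw [h2] at h1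
  rw [← ZMod.card_units_eq_totient, ← ZMod.card_units_eq_totient,
    ← Nat.card_eq_fintype_card, ← Nat.card_eq_fintype_card, h1]
  ring

lemma ramanujanSum_eq_units_sum (n : ℕ) [NeZero n] (r : ℤ) :
    ramanujanSum n r = ∑ u : (ZMod n)ˣ, rz n ^ (((u : ZMod n).val : ℤ) * r) := by
  have hn : 0 < n := Nat.pos_of_ne_zero (NeZero.ne n)
  have hrzn : rz n ^ (n : ℤ) = 1 := by
    have := (Complex.isPrimitiveRoot_exp n (NeZero.ne n)).pow_eq_one
    rw [zpow_natCast]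
    simpa [rz] using this
  set F : ℕ → ℂ := fun j => if Nat.gcd j n = 1 then rz n ^ ((j : ℤ) * r) else 0 with hF
  have h0 : ramanujanSum n r = ∑ j ∈ Finset.Icc 1 n, F j := by
    refine Finset.sum_congr rfl fun j _ => ?_
    simp only [hF, exp_eq_rz]
  have hFn : F n = F 0 := by
    simp only [hF, Nat.gcd_self, Nat.gcd_zero_left]
    rcases eq_or_ne n 1 with h1 | h1
    · rw [if_pos h1, if_pos h1, zpow_mul, hrzn, one_zpow, Nat.cast_zero, zero_mul, zpow_zero]
    · rw [if_neg h1, if_neg h1]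
  have h1 : ∑ j ∈ Finset.Icc 1 n, F j = ∑ j ∈ Finset.range n, F j := by
    rw [← Finset.Ico_add_one_right_eq_Icc, Finset.sum_Ico_succ_top hn, hFn,
      Finset.range_eq_Ico, Finset.sum_eq_sum_Ico_succ_bot hn]
    ring
  have h2 : ∑ j ∈ Finset.range n, F j
      = ∑ j ∈ (Finset.range n).filter (fun j => Nat.gcd j n = 1), rz n ^ ((j : ℤ) * r) := by
    rw [Finset.sum_filter]
  rw [h0, h1, h2]
  symm
  refine Finset.sum_bij (fun u _ => (u : ZMod n).val) ?_ ?_ ?_ ?_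
  · intro u _
    simp only [Finset.mem_filter, Finset.mem_range]
    exact ⟨ZMod.val_lt _, ZMod.val_coe_unit_coprime u⟩
  · intro u _ u' _ hval
    ext
    exact ZMod.val_injective n hval
  · intro j hj
    simp only [Finset.mem_filter, Finset.mem_range] at hj
    refine ⟨ZMod.unitOfCoprime j hj.2, Finset.mem_univ _, ?_⟩
    simp [ZMod.unitOfCoprime, ZMod.val_cast_of_lt hj.1]
  · intro u _
    rfl

lemma rz_pow_gcd (n g m : ℕ) (hn : n ≠ 0) (hm : m ≠ 0) (hnm : n = g * m) :
    rz n ^ (g : ℤ) = rz m := by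
  rw [rz, rz, zpow_natCast, ← Complex.exp_nat_mul]
  congr 1
  have hn' : (n : ℂ) ≠ 0 := Nat.cast_ne_zero.mpr hn
  have hm' : (m : ℂ) ≠ 0 := Nat.cast_ne_zero.mpr hm
  field_simp
  rw [hnm]
  push_cast
  ring

lemma val_unitsMap_cast (m n : ℕ) [NeZero n] [NeZero m] (h : m ∣ n) (u : (ZMod n)ˣ) :
    (((ZMod.unitsMap h u : ZMod m)).val : ZMod m) = (((u : ZMod n).val : ℕ) : ZMod m) := by
  rw [ZMod.natCast_val, ZMod.cast_id, ZMod.unitsMap_def, Units.coe_map]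
  simp only [MonoidHom.coe_coe, ZMod.castHom_apply]
  conv_lhs => rw [← ZMod.natCast_val (u : ZMod n)]

end RamanujanAux

open RamanujanAux in
theorem holder_identity (n : ℕ) (hn : 1 ≤ n) (r : ℤ) :
    ramanujanSum n r =
      (n.totient : ℂ) *
        (ArithmeticFunction.moebius (n / Int.gcd (n : ℤ) r) : ℂ) /
          ((n / Int.gcd (n : ℤ) r : ℕ).totient : ℂ) := by
  haveI : NeZero n := ⟨by omega⟩
  have hn0 : n ≠ 0 := by omega
  set g : ℕ := Int.gcd (n : ℤ) r with hgdef
  have hg0 : 0 < g := Int.gcd_pos_of_ne_zero_left r (by exact_mod_cast hn0)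
  have hgdvdn : g ∣ n := Int.natCast_dvd_natCast.mp
    ((Int.gcd_dvd_left _ _ : (g : ℤ) ∣ (n : ℤ)))
  have hgdvdr : (g : ℤ) ∣ r := Int.gcd_dvd_right _ _
  set m : ℕ := n / g with hmdef
  have hnm : n = g * m := (Nat.mul_div_cancel' hgdvdn).symm
  have hm0 : 0 < m := by
    rcases Nat.eq_zero_or_pos m with h | h
    · rw [h, mul_zero] at hnm; omega
    · exact h
  haveI : NeZero m := ⟨hm0.ne'⟩
  set s : ℤ := r / g with hsdef
  have hrs : r = g * s := (Int.mul_ediv_cancel' hgdvdr).symm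
  have hcop : Int.gcd s m = 1 := by
    have hgpos : 0 < Int.gcd (n : ℤ) r := hg0
    have := Int.gcd_div_gcd_div_gcd (i := (n : ℤ)) (j := r) hgpos
    have hmeq : ((n : ℤ) / Int.gcd (n : ℤ) r) = (m : ℤ) := by
      rw [hmdef, Int.natCast_ediv]
    rw [Int.gcd_comm, ← hmeq]
    exact this
  have hmdvd : m ∣ n := ⟨g, by rw [hnm]; ring⟩
  set K := Nat.card (ZMod.unitsMap hmdvd).ker with hKdef
  have htot : Nat.totient n = K * Nat.totient m := totient_eq_card_ker_mul hmdvd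
  have hpt : ∀ u : (ZMod n)ˣ, rz n ^ (((u : ZMod n).val : ℤ) * r)
      = rz m ^ ((((ZMod.unitsMap hmdvd u : ZMod m)).val : ℤ) * s) := by
    intro u
    have h1 : rz n ^ (((u : ZMod n).val : ℤ) * r)
        = rz m ^ (((u : ZMod n).val : ℤ) * s) := by
      rw [hrs, show ((u : ZMod n).val : ℤ) * ((g : ℤ) * s)
          = (g : ℤ) * (((u : ZMod n).val : ℤ) * s) by ring,
        zpow_mul, rz_pow_gcd n g m hn0 hm0.ne' hnm]
    rw [h1]
    refine zpow_congr hm0.ne' (rz_prim hm0.ne') ?_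
    push_cast
    rw [val_unitsMap_cast m n hmdvd u]
  have hmain : ramanujanSum n r = (K : ℂ) * (ArithmeticFunction.moebius m : ℂ) := by
    calc ramanujanSum n r
        = ∑ u : (ZMod n)ˣ, rz n ^ (((u : ZMod n).val : ℤ) * r) :=
          ramanujanSum_eq_units_sum n r
      _ = ∑ u : (ZMod n)ˣ, (fun v : (ZMod m)ˣ => rz m ^ (((v : ZMod m).val : ℤ) * s))
            (ZMod.unitsMap hmdvd u) := Finset.sum_congr rfl fun u _ => hpt u
      _ = K • ∑ v : (ZMod m)ˣ, rz m ^ (((v : ZMod m).val : ℤ) * s) :=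
          by exact sum_comp_unitsMap hmdvd fun v : (ZMod m)ˣ => rz m ^ (((v : ZMod m).val : ℤ) * s)
      _ = (K : ℂ) * (ArithmeticFunction.moebius m : ℂ) := by
          rw [units_sum_eq m hm0 s hcop, sum_primitiveRoots_eq_moebius m hm0,
            nsmul_eq_mul]
  rw [hmain, htot]
  have hphi : ((Nat.totient m : ℂ)) ≠ 0 := by
    exact_mod_cast (Nat.totient_pos.mpr hm0).ne'
  push_cast
  field_simp
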